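/- There exists a constant C > 0 such that for every open bounded interval I ⊂ ℝ, every s ∈ (0,1), every u ∈ H^s(I), and every subinterval J ⊆ I with 2|J| ≥ |I|, one has ‖u‖_{L²(I)} ≤ C ( |I|^{-1/2} |∫_J u(x) dx| + |I|^s [u]_s(I) ), where [u]_s is the Gagliardo seminorm; here C may depend on s but not on I, J or u. -/

import Mathlib

open MeasureTheory Set

lemma sq_integral_le_cs {α : Type*} [MeasurableSpace α] (μ : Measure α) [IsFiniteMeasure μ]
    {f : α → ℝ} (hf : MemLp f 2 μ) :
    (∫ a, f a ∂μ) ^ 2 ≤ (μ Set.univ).toReal * ∫ a, f a ^ 2 ∂μ := by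
  have h2 : Real.HolderConjugate 2 2 := ⟨by norm_num, by norm_num, by norm_num⟩
  have hfa : MemLp (fun a => |f a|) (ENNReal.ofReal 2) μ := by
    have := hf.norm
    simpa [Real.norm_eq_abs, ENNReal.ofReal_ofNat] using this
  have h1 : MemLp (fun _ : α => (1:ℝ)) (ENNReal.ofReal 2) μ := memLp_const 1
  have hH := integral_mul_le_Lp_mul_Lq_of_nonneg h2
    (Filter.Eventually.of_forall fun a => abs_nonneg (f a))
    (Filter.Eventually.of_forall fun _ => zero_le_one) hfa h1
  simp only [mul_one, one_pow] at hH
  have habs : |∫ a, f a ∂μ| ≤ ∫ a, |f a| ∂μ := by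
    simpa [Real.norm_eq_abs] using norm_integral_le_integral_norm (μ := μ) f
  have hsq : ∫ a, |f a| ^ (2:ℝ) ∂μ = ∫ a, f a ^ 2 ∂μ := by
    refine integral_congr_ae (Filter.Eventually.of_forall fun a => ?_)
    simp only [Real.rpow_two, sq_abs]
  rw [hsq] at hH
  have hone : (∫ _ : α, (1:ℝ) ^ (2:ℝ) ∂μ) = (μ Set.univ).toReal := by
    simp [Real.one_rpow, measureReal_def]
  rw [hone] at hH
  have hnn : 0 ≤ ∫ a, f a ^ 2 ∂μ := integral_nonneg fun a => sq_nonneg _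
  have hμ : 0 ≤ (μ Set.univ).toReal := ENNReal.toReal_nonneg
  calc (∫ a, f a ∂μ) ^ 2 = |∫ a, f a ∂μ| ^ 2 := (sq_abs _).symm
    _ ≤ (∫ a, |f a| ∂μ) ^ 2 := by
        exact pow_le_pow_left₀ (abs_nonneg _) habs 2
    _ ≤ ((∫ a, f a ^ 2 ∂μ) ^ ((1:ℝ)/2) * (μ Set.univ).toReal ^ ((1:ℝ)/2)) ^ 2 := by
        refine pow_le_pow_left₀ (integral_nonneg fun a => abs_nonneg _) hH 2
    _ = (μ Set.univ).toReal * ∫ a, f a ^ 2 ∂μ := by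
        rw [mul_pow, ← Real.rpow_natCast ((∫ a, f a ^ 2 ∂μ) ^ ((1:ℝ)/2)) 2,
          ← Real.rpow_natCast ((μ Set.univ).toReal ^ ((1:ℝ)/2)) 2,
          ← Real.rpow_mul hnn, ← Real.rpow_mul hμ]
        norm_num
        ring

lemma sqrt_add_le' {A B : ℝ} (hA : 0 ≤ A) (hB : 0 ≤ B) :
    Real.sqrt (A + B) ≤ Real.sqrt A + Real.sqrt B := by
  have h : A + B ≤ (Real.sqrt A + Real.sqrt B) ^ 2 := by
    have h1 := Real.sq_sqrt hA
    have h2 := Real.sq_sqrt hB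
    nlinarith [Real.sqrt_nonneg A, Real.sqrt_nonneg B]
  calc Real.sqrt (A + B) ≤ Real.sqrt ((Real.sqrt A + Real.sqrt B) ^ 2) := Real.sqrt_le_sqrt h
    _ = _ := Real.sqrt_sq (by positivity)

lemma F_int {u : ℝ → ℝ} (μ ν : Measure ℝ) [SFinite ν] [IsFiniteMeasure μ] [IsFiniteMeasure ν]
    (hu1 : Integrable u μ) (hu2 : Integrable (fun x => u x ^ 2) μ)
    (hv1 : Integrable u ν) (hv2 : Integrable (fun x => u x ^ 2) ν) :
    Integrable (fun p : ℝ × ℝ => (u p.1 - u p.2) ^ 2) (μ.prod ν) := by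
  have h1 : Integrable (fun z : ℝ × ℝ => u z.1 ^ 2 * 1) (μ.prod ν) :=
    hu2.mul_prod (integrable_const (1:ℝ))
  have h2 : Integrable (fun z : ℝ × ℝ => u z.1 * u z.2) (μ.prod ν) :=
    hu1.mul_prod hv1
  have h3 : Integrable (fun z : ℝ × ℝ => (1:ℝ) * u z.2 ^ 2) (μ.prod ν) :=
    (integrable_const (1:ℝ)).mul_prod hv2
  have h := (h1.sub (h2.const_mul 2)).add h3
  exact h.congr (Filter.Eventually.of_forall fun p => by simp only [Pi.add_apply, Pi.sub_apply]; ring)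

/-- Squared Gagliardo seminorm of order `s` of `u` on the interval `(a,b)`. -/
noncomputable def gagliardoSq (s : ℝ) (a b : ℝ) (u : ℝ → ℝ) : ℝ :=
  ∫ x in Set.Ioo a b, ∫ y in Set.Ioo a b, (u x - u y) ^ 2 / |x - y| ^ (1 + 2 * s)

set_option maxHeartbeats 2000000 in
/-- Poincaré-type estimate of the `L²` norm via the mean on a large
subinterval `J ⊆ I` (with `2|J| ≥ |I|`) and the Gagliardo `s`-seminorm. -/
theorem l2_bound_by_mean_and_seminorm (s : ℝ) (hs : s ∈ Set.Ioo (0:ℝ) 1) :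
    ∃ C : ℝ, 0 < C ∧ ∀ (a b c d : ℝ), a < b → a ≤ c → c < d → d ≤ b →
      b - a ≤ 2 * (d - c) →
      ∀ u : ℝ → ℝ, MemLp u 2 (volume.restrict (Set.Ioo a b)) →
        IntegrableOn
          (fun p : ℝ × ℝ => (u p.1 - u p.2) ^ 2 / |p.1 - p.2| ^ (1 + 2 * s))
          (Set.Ioo a b ×ˢ Set.Ioo a b) volume →
        Real.sqrt (∫ x in Set.Ioo a b, (u x) ^ 2) ≤
          C * ((b - a) ^ (-(1:ℝ)/2) * |∫ x in Set.Ioo c d, u x| +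
               (b - a) ^ s * Real.sqrt (gagliardoSq s a b u)) := by
  obtain ⟨hs0, hs1⟩ := hs
  refine ⟨3, by norm_num, ?_⟩
  intro a b c d hab hac hcd hdb hJ u hu hg
  set I := Set.Ioo a b with hIdef
  set J := Set.Ioo c d with hJdef
  set L := b - a with hLdef
  set l := d - c with hldef
  have hL : 0 < L := sub_pos.mpr hab
  have hl : 0 < l := sub_pos.mpr hcd
  have hJI : J ⊆ I := Set.Ioo_subset_Ioo hac hdb
  set μ := volume.restrict I with hμdef
  set ν := volume.restrict J with hνdef
  haveI hμfin : IsFiniteMeasure μ := by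
    refine ⟨?_⟩
    rw [hμdef, Measure.restrict_apply_univ, hIdef, Real.volume_Ioo]
    exact ENNReal.ofReal_lt_top
  haveI hνfin : IsFiniteMeasure ν := by
    refine ⟨?_⟩
    rw [hνdef, Measure.restrict_apply_univ, hJdef, Real.volume_Ioo]
    exact ENNReal.ofReal_lt_top
  have hμuniv : (μ Set.univ).toReal = L := by
    rw [hμdef, Measure.restrict_apply_univ, hIdef, Real.volume_Ioo,
      ENNReal.toReal_ofReal hL.le]
  have hνuniv : (ν Set.univ).toReal = l := by
    rw [hνdef, Measure.restrict_apply_univ, hJdef, Real.volume_Ioo,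
      ENNReal.toReal_ofReal hl.le]
  have hνμ : ν ≤ μ := Measure.restrict_mono hJI le_rfl
  have huν : MemLp u 2 ν := hu.mono_measure hνμ
  have hu1 : Integrable u μ := hu.integrable one_le_two
  have hν1 : Integrable u ν := huν.integrable one_le_two
  have hu2 : Integrable (fun x => u x ^ 2) μ := hu.integrable_sq
  have hν2 : Integrable (fun x => u x ^ 2) ν := huν.integrable_sq
  set F : ℝ × ℝ → ℝ := fun p => (u p.1 - u p.2) ^ 2 with hFdef
  have hFIJ : Integrable F (μ.prod ν) := F_int μ ν hu1 hu2 hν1 hν2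
  have hFII : Integrable F (μ.prod μ) := F_int μ μ hu1 hu2 hu1 hu2
  set g : ℝ × ℝ → ℝ := fun p => (u p.1 - u p.2) ^ 2 / |p.1 - p.2| ^ (1 + 2 * s) with hgdef
  have hprodμ : μ.prod μ = (volume : Measure (ℝ × ℝ)).restrict (I ×ˢ I) := by
    rw [hμdef, Measure.prod_restrict, ← Measure.volume_eq_prod]
  have hgPP : Integrable g (μ.prod μ) := by
    rw [hprodμ]; exact hg
  have hFslice : ∀ᵐ x ∂μ, Integrable (fun y => F (x, y)) μ := hFII.prod_right_ae
  have hgslice : ∀ᵐ x ∂μ, Integrable (fun y => g (x, y)) μ := hgPP.prod_right_ae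
  have hgnn : ∀ p : ℝ × ℝ, 0 ≤ g p := fun p =>
    div_nonneg (sq_nonneg _) (Real.rpow_nonneg (abs_nonneg _) _)
  have hG : gagliardoSq s a b u = ∫ x, (∫ y, g (x, y) ∂μ) ∂μ := rfl
  have hGnn : 0 ≤ gagliardoSq s a b u := by
    rw [hG]; exact integral_nonneg fun x => integral_nonneg fun y => hgnn _
  set m := ∫ x in J, u x with hmdef
  set K := m / l with hKdef
  -- Step A
  have hφ : Integrable (fun x => (u x - K) ^ 2) μ := by
    have h := (hu2.sub (hu1.const_mul (2 * K))).add (integrable_const (K ^ 2))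
    exact h.congr (Filter.Eventually.of_forall fun x => by simp only [Pi.add_apply, Pi.sub_apply]; ring)
  have hA : ∫ x, u x ^ 2 ∂μ ≤ L * (2 * K ^ 2) + 2 * ∫ x, (u x - K) ^ 2 ∂μ := by
    have h1 : Integrable (fun x => 2 * K ^ 2 + 2 * (u x - K) ^ 2) μ :=
      (integrable_const _).add (hφ.const_mul 2)
    have h2 := integral_mono hu2 h1 (fun x => by nlinarith [sq_nonneg (u x - 2 * K)])
    rwa [integral_add (integrable_const _) (hφ.const_mul 2), integral_const,
      measureReal_def, hμuniv, smul_eq_mul, integral_const_mul] at h2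
  -- Step B
  set ψ : ℝ → ℝ := fun x => ∫ y, F (x, y) ∂ν with hψdef
  have hψint : Integrable ψ μ := hFIJ.integral_prod_left
  have hptB : ∀ x, (u x - K) ^ 2 ≤ (1 / l) * ψ x := by
    intro x
    have hmean : ∫ y, (u x - u y) ∂ν = l * u x - m := by
      rw [integral_sub (integrable_const _) hν1, integral_const, measureReal_def, hνuniv, smul_eq_mul]
    have hcs := sq_integral_le_cs ν (f := fun y => u x - u y)
      ((memLp_const (u x)).sub huν)
    rw [hmean, hνuniv] at hcs
    have hx : u x - K = (l * u x - m) / l := by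
      rw [hKdef]; field_simp; try ring
    rw [hx, div_pow]
    have hψx : ψ x = ∫ y, (u x - u y) ^ 2 ∂ν := rfl
    rw [hψx]
    rw [div_le_iff₀ (by positivity : (0:ℝ) < l ^ 2)]
    have hq : 1 / l * (∫ y, (u x - u y) ^ 2 ∂ν) * l ^ 2 = l * ∫ y, (u x - u y) ^ 2 ∂ν := by
      field_simp
      try ring
    rw [hq]
    exact hcs
  have hB : ∫ x, (u x - K) ^ 2 ∂μ ≤ (1 / l) * ∫ x, ψ x ∂μ := by
    have h := integral_mono hφ (hψint.const_mul (1 / l)) hptB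
    rwa [integral_const_mul] at h
  -- Step C
  set χ : ℝ → ℝ := fun x => ∫ y, F (x, y) ∂μ with hχdef
  have hχint : Integrable χ μ := hFII.integral_prod_left
  have hC : ∫ x, ψ x ∂μ ≤ ∫ x, χ x ∂μ := by
    refine integral_mono_ae hψint hχint ?_
    filter_upwards [hFslice] with x hx
    exact setIntegral_mono_set hx (ae_of_all _ fun y => sq_nonneg _)
      (HasSubset.Subset.eventuallyLE hJI)
  -- Step D
  have hptD : ∀ x ∈ I, ∀ y ∈ I, F (x, y) ≤ L ^ (1 + 2 * s) * g (x, y) := by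
    intro x hx y hy
    rcases eq_or_ne x y with h | h
    · subst h
      have : F (x, x) = 0 := by simp [hFdef]
      rw [this]
      exact mul_nonneg (Real.rpow_nonneg hL.le _) (hgnn _)
    · have hxy : 0 < |x - y| := abs_pos.mpr (sub_ne_zero.mpr h)
      have hle : |x - y| ≤ L := by
        rw [abs_sub_le_iff]
        obtain ⟨hx1, hx2⟩ := hx
        obtain ⟨hy1, hy2⟩ := hy
        constructor <;> simp only [hLdef] <;> linarith
      have hpow : |x - y| ^ (1 + 2 * s) ≤ L ^ (1 + 2 * s) :=
        Real.rpow_le_rpow (abs_nonneg _) hle (by linarith)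
      have hFg : F (x, y) = g (x, y) * |x - y| ^ (1 + 2 * s) := by
        simp only [hFdef, hgdef]
        rw [div_mul_cancel₀]
        exact ne_of_gt (Real.rpow_pos_of_pos hxy _)
      rw [hFg]
      calc g (x, y) * |x - y| ^ (1 + 2 * s)
          ≤ g (x, y) * L ^ (1 + 2 * s) := mul_le_mul_of_nonneg_left hpow (hgnn _)
        _ = L ^ (1 + 2 * s) * g (x, y) := mul_comm _ _
  have hD : ∫ x, χ x ∂μ ≤ L ^ (1 + 2 * s) * gagliardoSq s a b u := by
    have h2 : Integrable (fun x => L ^ (1 + 2 * s) * ∫ y, g (x, y) ∂μ) μ :=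
      (hgPP.integral_prod_left).const_mul _
    have hDae : ∀ᵐ x ∂μ, χ x ≤ L ^ (1 + 2 * s) * ∫ y, g (x, y) ∂μ := by
      filter_upwards [hFslice, hgslice, ae_restrict_mem measurableSet_Ioo]
        with x hFx hgx hxI
      have hmono : χ x ≤ ∫ y, L ^ (1 + 2 * s) * g (x, y) ∂μ := by
        refine integral_mono_ae hFx (hgx.const_mul _) ?_
        filter_upwards [ae_restrict_mem measurableSet_Ioo] with y hyI
        exact hptD x hxI y hyI
      rwa [integral_const_mul] at hmono
    have h := integral_mono_ae hχint h2 hDae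
    rwa [integral_const_mul, ← hG] at h
  -- combine
  set G := gagliardoSq s a b u with hGdef
  have key : ∫ x, u x ^ 2 ∂μ ≤ 8 * m ^ 2 / L + 4 * L ^ (2 * s) * G := by
    have c1 : L * (2 * K ^ 2) ≤ 8 * m ^ 2 / L := by
      have h1 : L * (2 * K ^ 2) = 2 * L * m ^ 2 / l ^ 2 := by
        rw [hKdef]
        field_simp
        try ring
      rw [h1, div_le_div_iff₀ (by positivity) hL]
      nlinarith [sq_nonneg m, mul_le_mul_of_nonneg_left
        (mul_le_mul hJ hJ hL.le (by positivity)) (sq_nonneg m)]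
    have hpowadd : L ^ (1 + 2 * s) = L * L ^ (2 * s) := by
      rw [Real.rpow_add hL, Real.rpow_one]
    have c2 : 2 * (1 / l * (L ^ (1 + 2 * s) * G)) ≤ 4 * L ^ (2 * s) * G := by
      rw [hpowadd]
      have h2Ll : 2 * L ≤ 4 * l := by linarith
      have hq : 2 * (1 / l * (L * L ^ (2 * s) * G)) = (2 * L / l) * (L ^ (2 * s) * G) := by
        field_simp
        try ring
      rw [hq]
      have hfrac : 2 * L / l ≤ 4 := by
        rw [div_le_iff₀ hl]; linarith
      have hnn : 0 ≤ L ^ (2 * s) * G := mul_nonneg (Real.rpow_nonneg hL.le _) hGnn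
      calc (2 * L / l) * (L ^ (2 * s) * G) ≤ 4 * (L ^ (2 * s) * G) :=
            mul_le_mul_of_nonneg_right hfrac hnn
        _ = 4 * L ^ (2 * s) * G := by ring
    have e2 : 2 * (∫ x, (u x - K) ^ 2 ∂μ) ≤ 2 * (1 / l * ∫ x, ψ x ∂μ) := by linarith
    have e3 : 1 / l * ∫ x, ψ x ∂μ ≤ 1 / l * ∫ x, χ x ∂μ :=
      mul_le_mul_of_nonneg_left hC (by positivity)
    have e4 : 1 / l * ∫ x, χ x ∂μ ≤ 1 / l * (L ^ (1 + 2 * s) * G) :=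
      mul_le_mul_of_nonneg_left hD (by positivity)
    calc ∫ x, u x ^ 2 ∂μ ≤ L * (2 * K ^ 2) + 2 * ∫ x, (u x - K) ^ 2 ∂μ := hA
      _ ≤ L * (2 * K ^ 2) + 2 * (1 / l * ∫ x, ψ x ∂μ) := by linarith
      _ ≤ L * (2 * K ^ 2) + 2 * (1 / l * ∫ x, χ x ∂μ) := by linarith
      _ ≤ L * (2 * K ^ 2) + 2 * (1 / l * (L ^ (1 + 2 * s) * G)) := by linarith
      _ ≤ 8 * m ^ 2 / L + 4 * L ^ (2 * s) * G := by linarith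
  -- final sqrt step
  have hX : (0:ℝ) ≤ Real.sqrt 8 * |m| * L ^ (-(1:ℝ)/2) :=
    mul_nonneg (mul_nonneg (Real.sqrt_nonneg _) (abs_nonneg _)) (Real.rpow_nonneg hL.le _)
  have hY : (0:ℝ) ≤ 2 * L ^ s * Real.sqrt G :=
    mul_nonneg (mul_nonneg (by norm_num) (Real.rpow_nonneg hL.le _)) (Real.sqrt_nonneg _)
  have h8 : 8 * m ^ 2 / L + 4 * L ^ (2 * s) * G =
      (Real.sqrt 8 * |m| * L ^ (-(1:ℝ)/2)) ^ 2 + (2 * L ^ s * Real.sqrt G) ^ 2 := by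
    have hp1 : (L ^ (-(1:ℝ)/2)) ^ 2 = L⁻¹ := by
      rw [sq, ← Real.rpow_add hL]
      norm_num [Real.rpow_neg_one]
    have hp2 : (L ^ s) ^ 2 = L ^ (2 * s) := by
      rw [sq, ← Real.rpow_add hL]; ring_nf
    rw [mul_pow, mul_pow, mul_pow, mul_pow, hp1, hp2,
      Real.sq_sqrt (by norm_num : (0:ℝ) ≤ 8), Real.sq_sqrt hGnn, sq_abs]
    ring
  have hs8 : Real.sqrt 8 ≤ 3 := by
    have h9 : Real.sqrt 9 = 3 := by
      rw [show (9:ℝ) = 3 ^ 2 by norm_num, Real.sqrt_sq (by norm_num)]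
    calc Real.sqrt 8 ≤ Real.sqrt 9 := Real.sqrt_le_sqrt (by norm_num)
      _ = 3 := h9
  calc Real.sqrt (∫ x, u x ^ 2 ∂μ)
      ≤ Real.sqrt (8 * m ^ 2 / L + 4 * L ^ (2 * s) * G) := Real.sqrt_le_sqrt key
    _ = Real.sqrt ((Real.sqrt 8 * |m| * L ^ (-(1:ℝ)/2)) ^ 2 +
          (2 * L ^ s * Real.sqrt G) ^ 2) := by rw [h8]
    _ ≤ Real.sqrt ((Real.sqrt 8 * |m| * L ^ (-(1:ℝ)/2)) ^ 2) +
          Real.sqrt ((2 * L ^ s * Real.sqrt G) ^ 2) :=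
        sqrt_add_le' (sq_nonneg _) (sq_nonneg _)
    _ = Real.sqrt 8 * |m| * L ^ (-(1:ℝ)/2) + 2 * L ^ s * Real.sqrt G := by
        rw [Real.sqrt_sq hX, Real.sqrt_sq hY]
    _ ≤ 3 * (L ^ (-(1:ℝ)/2) * |m| + L ^ s * Real.sqrt G) := by
        have t1 : 0 ≤ |m| * L ^ (-(1:ℝ)/2) := mul_nonneg (abs_nonneg _) (Real.rpow_nonneg hL.le _)
        have t2 : 0 ≤ L ^ s * Real.sqrt G :=
          mul_nonneg (Real.rpow_nonneg hL.le _) (Real.sqrt_nonneg _)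
        nlinarith [mul_le_mul_of_nonneg_right hs8 t1]
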